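/- Let H₀ : D → 𝓗 be a symmetric linear operator that is bounded below (there is c ∈ ℝ with ⟨H₀ψ,ψ⟩ ≥ c‖ψ‖² for all ψ ∈ D), and let H₁ : D → 𝓗 be a symmetric linear operator such that for some constants 0 ≤ a < 1 and b ≥ 0 one has |⟨H₁ψ,ψ⟩| ≤ a·⟨H₀ψ,ψ⟩ + b·‖ψ‖² for all ψ ∈ D. Then for every n ≥ 1 the min–max values satisfy μₙ(H₀ + H₁) ≥ (1 − a)·μₙ(H₀) − b. -/

import Mathlib

/-- `U_H(φ₁,…,φ_m) = inf{⟨Hψ,ψ⟩ : ψ ∈ D, ‖ψ‖ = 1, ψ ⊥ φⱼ for all j}`. -/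
noncomputable def minMaxU {E : Type*} [NormedAddCommGroup E] [InnerProductSpace ℂ E]
    {D : Submodule ℂ E} (H : D →ₗ[ℂ] E) {m : ℕ} (φ : Fin m → E) : ℝ :=
  sInf {r : ℝ | ∃ ψ : D, ‖(ψ : E)‖ = 1 ∧ (∀ j, (inner ℂ (ψ : E) (φ j) : ℂ) = 0) ∧
    r = (inner ℂ (H ψ) (ψ : E) : ℂ).re}

/-- The min–max values `μₙ(H) = sup_{φ₁,…,φ_{n−1}} U_H(φ₁,…,φ_{n−1})`. -/
noncomputable def minMaxMu {E : Type*} [NormedAddCommGroup E] [InnerProductSpace ℂ E]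
    {D : Submodule ℂ E} (H : D →ₗ[ℂ] E) (n : ℕ) : ℝ :=
  sSup {s : ℝ | ∃ φ : Fin (n - 1) → E, s = minMaxU H φ}

/-- **Min–max estimate for a relatively form-bounded perturbation.**
If `H₀` is symmetric and bounded below and `H₁` is symmetric with
`|⟨H₁ψ,ψ⟩| ≤ a⟨H₀ψ,ψ⟩ + b‖ψ‖²` for some `0 ≤ a < 1`, `b ≥ 0`, then
`μₙ(H₀ + H₁) ≥ (1 − a)·μₙ(H₀) − b` for every `n ≥ 1`. -/
theorem minMax_of_relatively_bounded_perturbation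
    {E : Type*} [NormedAddCommGroup E] [InnerProductSpace ℂ E] [CompleteSpace E]
    (D : Submodule ℂ E) (hD : Dense (D : Set E))
    (H0 H1 : D →ₗ[ℂ] E)
    (hsym0 : ∀ ψ φ : D, (inner ℂ (H0 ψ) (φ : E) : ℂ) = inner ℂ (ψ : E) (H0 φ))
    (hsym1 : ∀ ψ φ : D, (inner ℂ (H1 ψ) (φ : E) : ℂ) = inner ℂ (ψ : E) (H1 φ))
    (hbdd : ∃ c : ℝ, ∀ ψ : D, c * ‖(ψ : E)‖ ^ 2 ≤ (inner ℂ (H0 ψ) (ψ : E) : ℂ).re)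
    (a b : ℝ) (ha0 : 0 ≤ a) (ha1 : a < 1) (hb : 0 ≤ b)
    (hrel : ∀ ψ : D, ‖(inner ℂ (H1 ψ) (ψ : E) : ℂ)‖ ≤
      a * (inner ℂ (H0 ψ) (ψ : E) : ℂ).re + b * ‖(ψ : E)‖ ^ 2) :
    ∀ n : ℕ, 1 ≤ n → (1 - a) * minMaxMu H0 n - b ≤ minMaxMu (H0 + H1) n := by

  obtain ⟨c, hc⟩ := hbdd
  intro n hn
  have ha1' : (0:ℝ) < 1 - a := by linarith
  have ha2 : (0:ℝ) < 1 + a := by linarith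
  -- pointwise estimate
  have hpt : ∀ ψ : D, ‖(ψ:E)‖ = 1 →
      (1-a) * (inner ℂ (H0 ψ) ((ψ:E)) : ℂ).re - b ≤ (inner ℂ ((H0+H1) ψ) ((ψ:E)) : ℂ).re ∧
      (inner ℂ ((H0+H1) ψ) ((ψ:E)) : ℂ).re ≤ (1+a) * (inner ℂ (H0 ψ) ((ψ:E)) : ℂ).re + b := by
    intro ψ hψ
    have h1 : ((inner ℂ ((H0+H1) ψ) ((ψ:E)) : ℂ)).re
        = (inner ℂ (H0 ψ) ((ψ:E)) : ℂ).re + (inner ℂ (H1 ψ) ((ψ:E)) : ℂ).re := by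
      simp [LinearMap.add_apply, inner_add_left]
    have h2 := hrel ψ
    rw [hψ] at h2
    have h3 : |(inner ℂ (H1 ψ) ((ψ:E)) : ℂ).re| ≤ a * (inner ℂ (H0 ψ) ((ψ:E)) : ℂ).re + b := by
      calc |(inner ℂ (H1 ψ) ((ψ:E)) : ℂ).re| ≤ ‖(inner ℂ (H1 ψ) ((ψ:E)) : ℂ)‖ :=
            Complex.abs_re_le_norm _
        _ ≤ _ := by simpa using h2
    obtain ⟨h4, h5⟩ := abs_le.mp h3
    constructor <;> linarith
  -- per-φ estimates on minMaxU
  have key : ∀ φ : Fin (n-1) → E,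
      ((1-a) * minMaxU H0 φ - b ≤ minMaxU (H0+H1) φ) ∧
      (minMaxU (H0+H1) φ ≤ max 0 ((1+a) * minMaxU H0 φ + b)) := by
    intro φ
    set T0 : Set ℝ := {r : ℝ | ∃ ψ : D, ‖(ψ : E)‖ = 1 ∧ (∀ j, (inner ℂ (ψ : E) (φ j) : ℂ) = 0) ∧
      r = (inner ℂ (H0 ψ) (ψ : E) : ℂ).re} with hT0def
    set T1 : Set ℝ := {r : ℝ | ∃ ψ : D, ‖(ψ : E)‖ = 1 ∧ (∀ j, (inner ℂ (ψ : E) (φ j) : ℂ) = 0) ∧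
      r = (inner ℂ ((H0+H1) ψ) (ψ : E) : ℂ).re} with hT1def
    have hU0 : minMaxU H0 φ = sInf T0 := rfl
    have hU1 : minMaxU (H0+H1) φ = sInf T1 := rfl
    have hT0b : BddBelow T0 := by
      refine ⟨c, ?_⟩
      rintro r ⟨ψ, hψ, -, rfl⟩
      have := hc ψ
      rw [hψ] at this; simpa using this
    have hT1b : BddBelow T1 := by
      refine ⟨(1-a)*c - b, ?_⟩
      rintro r ⟨ψ, hψ, -, rfl⟩
      have h1 := (hpt ψ hψ).1
      have h2 := hc ψ
      rw [hψ] at h2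
      simp only [one_pow, mul_one] at h2
      nlinarith
    by_cases hne : ∃ ψ : D, ‖(ψ:E)‖ = 1 ∧ ∀ j, (inner ℂ ((ψ:E)) (φ j) : ℂ) = 0
    · obtain ⟨ψ₀, hψ₀, hφ₀⟩ := hne
      have hT0ne : T0.Nonempty := ⟨_, ψ₀, hψ₀, hφ₀, rfl⟩
      have hT1ne : T1.Nonempty := ⟨_, ψ₀, hψ₀, hφ₀, rfl⟩
      rw [hU0, hU1]
      constructor
      · have : ∀ r ∈ T1, (1-a) * sInf T0 - b ≤ r := by
          rintro r ⟨ψ, hψ, hφ, rfl⟩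
          have h1 := (hpt ψ hψ).1
          have h2 : sInf T0 ≤ (inner ℂ (H0 ψ) ((ψ:E)) : ℂ).re :=
            csInf_le hT0b ⟨ψ, hψ, hφ, rfl⟩
          nlinarith
        linarith [le_csInf hT1ne this]
      · have hstep : (sInf T1 - b)/(1+a) ≤ sInf T0 := by
          refine le_csInf hT0ne ?_
          rintro r ⟨ψ, hψ, hφ, rfl⟩
          have h1 := (hpt ψ hψ).2
          have h2 : sInf T1 ≤ (inner ℂ ((H0+H1) ψ) ((ψ:E)) : ℂ).re :=
            csInf_le hT1b ⟨ψ, hψ, hφ, rfl⟩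
          rw [div_le_iff₀ ha2]
          nlinarith
        rw [div_le_iff₀ ha2] at hstep
        have : sInf T1 ≤ (1+a) * sInf T0 + b := by nlinarith
        exact this.trans (le_max_right _ _)
    · have hT0e : T0 = ∅ := by
        ext r; simp only [Set.mem_empty_iff_false, iff_false, hT0def, Set.mem_setOf_eq]
        rintro ⟨ψ, hψ, hφ, rfl⟩; exact hne ⟨ψ, hψ, hφ⟩
      have hT1e : T1 = ∅ := by
        ext r; simp only [Set.mem_empty_iff_false, iff_false, hT1def, Set.mem_setOf_eq]
        rintro ⟨ψ, hψ, hφ, rfl⟩; exact hne ⟨ψ, hψ, hφ⟩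
      rw [hU0, hU1, hT0e, hT1e, Real.sInf_empty]
      constructor
      · linarith
      · exact le_max_left _ _
  set S0 : Set ℝ := {s : ℝ | ∃ φ : Fin (n-1) → E, s = minMaxU H0 φ} with hS0def
  set S1 : Set ℝ := {s : ℝ | ∃ φ : Fin (n-1) → E, s = minMaxU (H0+H1) φ} with hS1def
  have hmu0 : minMaxMu H0 n = sSup S0 := rfl
  have hmu1 : minMaxMu (H0+H1) n = sSup S1 := rfl
  rw [hmu0, hmu1]
  have hS0ne : S0.Nonempty := ⟨_, fun _ => (0:E), rfl⟩
  by_cases hbS1 : BddAbove S1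
  · have h : sSup S0 ≤ (sSup S1 + b)/(1-a) := by
      refine csSup_le hS0ne ?_
      rintro x ⟨φ, rfl⟩
      have h1 := (key φ).1
      have h2 : minMaxU (H0+H1) φ ≤ sSup S1 := le_csSup hbS1 ⟨φ, rfl⟩
      rw [le_div_iff₀ ha1']
      nlinarith
    rw [le_div_iff₀ ha1'] at h
    nlinarith
  · have hbS0 : ¬ BddAbove S0 := by
      intro hbS0
      obtain ⟨M, hM⟩ := hbS0
      refine hbS1 ⟨max 0 ((1+a)*M + b), ?_⟩
      rintro s ⟨φ, rfl⟩
      have h1 := (key φ).2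
      have h2 : minMaxU H0 φ ≤ M := hM ⟨φ, rfl⟩
      refine h1.trans (max_le_max le_rfl ?_)
      nlinarith
    rw [Real.sSup_of_not_bddAbove hbS0, Real.sSup_of_not_bddAbove hbS1]
    linarith
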